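/- For univariate measures μ, ν on ℝ with μ nonatomic, the map T(x) = F_ν⁻¹(F_μ(x)) pushes μ forward to ν, i.e. T_#μ = ν. -/

import Mathlib

open MeasureTheory Set Filter Function ProbabilityTheory
open scoped Topology

/-- For a nonatomic probability measure, the left limit of the cdf equals the cdf. -/
lemma my_leftLim (μ : Measure ℝ) [IsProbabilityMeasure μ] (hna : ∀ x : ℝ, μ {x} = 0) (x : ℝ) :
    leftLim (cdf μ) x = cdf μ x := by
  have h := (cdf μ).measure_singleton x
  rw [measure_cdf, hna x, eq_comm, ENNReal.ofReal_eq_zero] at h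
  have h4 := (monotone_cdf μ).leftLim_le (le_refl x)
  linarith

/-- For a nonatomic probability measure, the cdf is continuous. -/
lemma my_cont (μ : Measure ℝ) [IsProbabilityMeasure μ] (hna : ∀ x : ℝ, μ {x} = 0) :
    Continuous (cdf μ : ℝ → ℝ) :=
  continuous_iff_continuousAt.2 fun x =>
    (monotone_cdf μ).continuousAt_iff_leftLim_eq_rightLim.2
      (by rw [my_leftLim μ hna x, (cdf μ).rightLim_eq])

lemma my_ub (μ : Measure ℝ) [IsProbabilityMeasure μ] (hna : ∀ x : ℝ, μ {x} = 0)
    (c : ℝ) (hc1 : c < 1) :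
    μ {x | cdf μ x ≤ c} ≤ ENNReal.ofReal c := by
  set A := {x | cdf μ x ≤ c} with hA
  rcases eq_empty_or_nonempty A with h | h
  · simp [h]
  · have hbdd : BddAbove A := by
      obtain ⟨x0, hx0⟩ := ((tendsto_cdf_atTop μ).eventually_const_lt hc1).exists
      refine ⟨x0, fun x hx => ?_⟩
      by_contra h'
      push_neg at h'
      have := (monotone_cdf μ) h'.le
      have hxA : cdf μ x ≤ c := hx
      linarith
    set s := sSup A with hs
    have hAs : A ⊆ Iic s := fun x hx => le_csSup hbdd hx
    have hfs : cdf μ s ≤ c := by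
      rw [← my_leftLim μ hna s]
      refine le_of_tendsto ((monotone_cdf μ).tendsto_leftLim s) ?_
      filter_upwards [self_mem_nhdsWithin] with x hx
      obtain ⟨a, haA, hxa⟩ := exists_lt_of_lt_csSup h hx
      exact ((monotone_cdf μ) hxa.le).trans haA
    calc μ A ≤ μ (Iic s) := measure_mono hAs
    _ = ENNReal.ofReal (cdf μ s) := (ofReal_cdf μ s).symm
    _ ≤ ENNReal.ofReal c := ENNReal.ofReal_le_ofReal hfs

lemma my_cdf_level (μ : Measure ℝ) [IsProbabilityMeasure μ] (hna : ∀ x : ℝ, μ {x} = 0)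
    (c : ℝ) (hc1 : c ≤ 1) :
    μ {x | cdf μ x ≤ c} = ENNReal.ofReal c := by
  rcases eq_or_lt_of_le hc1 with rfl | hc
  · have huniv : {x : ℝ | cdf μ x ≤ (1 : ℝ)} = univ := eq_univ_of_forall fun x => cdf_le_one μ x
    simp [huniv]
  · refine le_antisymm (my_ub μ hna c hc) ?_
    rcases le_or_gt c 0 with h0 | h0
    · simp [ENNReal.ofReal_eq_zero.2 h0]
    · obtain ⟨a, ha⟩ := ((tendsto_cdf_atBot μ).eventually_lt_const h0).exists
      obtain ⟨b, hb⟩ := ((tendsto_cdf_atTop μ).eventually_const_lt hc).exists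
      have hab : a ≤ b := by
        by_contra hab
        push_neg at hab
        have := (monotone_cdf μ) hab.le
        linarith
      obtain ⟨s, -, hs⟩ := intermediate_value_Icc hab ((my_cont μ hna).continuousOn)
        (⟨ha.le, hb.le⟩ : c ∈ Icc (cdf μ a) (cdf μ b))
      have hsub : Iic s ⊆ {x | cdf μ x ≤ c} := fun x hx => by
        have : cdf μ x ≤ cdf μ s := (monotone_cdf μ) hx
        simpa [hs] using this
      calc ENNReal.ofReal c = μ (Iic s) := by rw [← ofReal_cdf, hs]
      _ ≤ _ := measure_mono hsub

lemma my_one_null (μ : Measure ℝ) [IsProbabilityMeasure μ] (hna : ∀ x : ℝ, μ {x} = 0) :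
    μ {x | cdf μ x = 1} = 0 := by
  set D := {x | cdf μ x = 1} with hD
  rcases eq_empty_or_nonempty D with h | h
  · simp [h]
  · have hbdd : BddBelow D := by
      obtain ⟨x0, hx0⟩ := ((tendsto_cdf_atBot μ).eventually_lt_const one_pos).exists
      refine ⟨x0, fun x hx => ?_⟩
      by_contra h'
      push_neg at h'
      have h2 := (monotone_cdf μ) h'.le
      have hx1 : cdf μ x = 1 := hx
      linarith
    set s := sInf D with hs
    have hfs : 1 ≤ cdf μ s := by
      have htd : Tendsto (cdf μ : ℝ → ℝ) (𝓝[>] s) (𝓝 (cdf μ s)) :=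
        ((cdf μ).right_continuous s).mono_left (nhdsWithin_mono _ Ioi_subset_Ici_self)
      refine ge_of_tendsto htd ?_
      filter_upwards [self_mem_nhdsWithin] with x hx
      obtain ⟨d, hd, hds⟩ := exists_lt_of_csInf_lt h hx
      have hd1 : cdf μ d = 1 := hd
      calc (1 : ℝ) = cdf μ d := hd1.symm
      _ ≤ cdf μ x := (monotone_cdf μ) hds.le
    have hIio : μ (Iio s) = 1 := by
      have h1 : μ (Iio s) = μ (Iic s) := by
        refine le_antisymm (measure_mono Iio_subset_Iic_self) ?_
        calc μ (Iic s) ≤ μ (Iio s ∪ {s}) := measure_mono (by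
              intro x hx
              have hxle : x ≤ s := hx
              rcases lt_or_eq_of_le hxle with h' | h'
              · exact Or.inl h'
              · exact Or.inr h')
        _ ≤ μ (Iio s) + μ {s} := measure_union_le _ _
        _ = μ (Iio s) := by rw [hna s, add_zero]
      have hfs1 : cdf μ s = 1 := le_antisymm (cdf_le_one μ s) hfs
      rw [h1, ← ofReal_cdf, hfs1]
      simp
    have hsub : D ⊆ Ici s := fun x hx => csInf_le hbdd hx
    refine le_antisymm ?_ zero_le
    calc μ D ≤ μ (Ici s) := measure_mono hsub
    _ = 0 := by
      rw [← compl_Iio, measure_compl measurableSet_Iio (measure_ne_top μ _), hIio,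
        measure_univ, tsub_self]

lemma my_galois (ν : Measure ℝ) [IsProbabilityMeasure ν] (a t : ℝ) (ha0 : 0 < a) (ha1 : a < 1) :
    sInf {τ | a ≤ cdf ν τ} ≤ t ↔ a ≤ cdf ν t := by
  set S := {τ | a ≤ cdf ν τ} with hS
  have hne : S.Nonempty := by
    obtain ⟨τ, hτ⟩ := ((tendsto_cdf_atTop ν).eventually_const_lt ha1).exists
    exact ⟨τ, hτ.le⟩
  have hbdd : BddBelow S := by
    obtain ⟨x0, hx0⟩ := eventually_atBot.1 ((tendsto_cdf_atBot ν).eventually_lt_const ha0)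
    refine ⟨x0, fun τ hτ => ?_⟩
    by_contra h'
    push_neg at h'
    have := hx0 τ h'.le
    have hτS : a ≤ cdf ν τ := hτ
    linarith
  have hmem : a ≤ cdf ν (sInf S) := by
    have htd : Tendsto (cdf ν : ℝ → ℝ) (𝓝[>] (sInf S)) (𝓝 (cdf ν (sInf S))) :=
      ((cdf ν).right_continuous _).mono_left (nhdsWithin_mono _ Ioi_subset_Ici_self)
    refine ge_of_tendsto htd ?_
    filter_upwards [self_mem_nhdsWithin] with x hx
    obtain ⟨τ, hτS, hτx⟩ := exists_lt_of_csInf_lt hne hx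
    exact (hτS : a ≤ cdf ν τ).trans ((monotone_cdf ν) hτx.le)
  constructor
  · intro h
    exact hmem.trans ((monotone_cdf ν) h)
  · intro h
    exact csInf_le hbdd h

theorem stmt_5 (μ ν : Measure ℝ) [IsProbabilityMeasure μ] [IsProbabilityMeasure ν]
    (hna : ∀ x : ℝ, μ {x} = 0)
    (F Q T : ℝ → ℝ)
    (hF : ∀ x, F x = (μ (Iic x)).toReal)
    (hQ : ∀ a, Q a = sInf {τ : ℝ | a ≤ (ν (Iic τ)).toReal})
    (hT : ∀ x, T x = Q (F x)) :
    Measure.map T μ = ν := by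
  have hF' : ∀ x, F x = cdf μ x := fun x => by rw [hF, cdf_eq_real, measureReal_def]
  have hQ' : ∀ a, Q a = sInf {τ | a ≤ cdf ν τ} := fun a => by
    rw [hQ]
    congr 1
    ext τ
    simp only [mem_setOf_eq, cdf_eq_real, measureReal_def]
  -- pointwise characterization of {T ≤ t}
  have hkey : ∀ t x, T x ≤ t ↔
      ((cdf μ x = 0 ∧ Q 0 ≤ t) ∨ (cdf μ x = 1 ∧ Q 1 ≤ t) ∨
        (0 < cdf μ x ∧ cdf μ x < 1 ∧ cdf μ x ≤ cdf ν t)) := by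
    intro t x
    rw [hT, hF']
    rcases eq_or_lt_of_le (cdf_nonneg μ x) with h0 | h0
    · rw [← h0]
      norm_num
    · rcases eq_or_lt_of_le (cdf_le_one μ x) with h1 | h1
      · rw [h1]
        norm_num
      · rw [hQ' (cdf μ x), my_galois ν _ t h0 h1]
        constructor
        · intro h
          exact Or.inr (Or.inr ⟨h0, h1, h⟩)
        · rintro (⟨h, -⟩ | ⟨h, -⟩ | ⟨-, -, h⟩)
          · linarith
          · linarith
          · exact h
  have hf_meas : Measurable (cdf μ : ℝ → ℝ) := (monotone_cdf μ).measurable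
  have hTset : ∀ t, T ⁻¹' (Iic t) =
      ((cdf μ : ℝ → ℝ) ⁻¹' {0} ∩ {_x : ℝ | Q 0 ≤ t}) ∪
      ((cdf μ : ℝ → ℝ) ⁻¹' {1} ∩ {_x : ℝ | Q 1 ≤ t}) ∪
      ((cdf μ : ℝ → ℝ) ⁻¹' (Ioo 0 1 ∩ Iic (cdf ν t))) := by
    intro t
    ext x
    simp only [mem_preimage, mem_Iic, mem_union, mem_inter_iff, mem_singleton_iff, mem_Ioo,
      mem_setOf_eq]
    rw [hkey t x]
    tauto
  have hTmeas : Measurable T := by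
    apply measurable_of_Iic
    intro t
    rw [hTset t]
    exact (((hf_meas (measurableSet_singleton 0)).inter (MeasurableSet.const _)).union
      ((hf_meas (measurableSet_singleton 1)).inter (MeasurableSet.const _))).union
      (hf_meas (measurableSet_Ioo.inter measurableSet_Iic))
  have h0null : μ {x | cdf μ x ≤ (0 : ℝ)} = 0 := by
    rw [my_cdf_level μ hna 0 (by norm_num)]
    simp
  have h1null : μ {x | cdf μ x = 1} = 0 := my_one_null μ hna
  have : IsProbabilityMeasure (Measure.map T μ) :=
    Measure.isProbabilityMeasure_map hTmeas.aemeasurable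
  refine Measure.ext_of_Iic (Measure.map T μ) ν fun t => ?_
  rw [Measure.map_apply hTmeas measurableSet_Iic, hTset t]
  set c := cdf ν t with hc
  set A := (cdf μ : ℝ → ℝ) ⁻¹' {0} ∩ {_x : ℝ | Q 0 ≤ t} with hAdef
  set B := (cdf μ : ℝ → ℝ) ⁻¹' {1} ∩ {_x : ℝ | Q 1 ≤ t} with hBdef
  set C := (cdf μ : ℝ → ℝ) ⁻¹' (Ioo 0 1 ∩ Iic c) with hCdef
  have hAnull : μ A = 0 := by
    refine le_antisymm (le_trans (measure_mono ?_) h0null.le) zero_le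
    intro x hx
    have : cdf μ x = 0 := hx.1
    simp [this]
  have hBnull : μ B = 0 := by
    refine le_antisymm (le_trans (measure_mono ?_) h1null.le) zero_le
    intro x hx
    exact hx.1
  have hunion : μ (A ∪ B ∪ C) = μ C := by
    refine le_antisymm ?_ (measure_mono subset_union_right)
    calc μ (A ∪ B ∪ C) ≤ μ (A ∪ B) + μ C := measure_union_le _ _
    _ ≤ (μ A + μ B) + μ C := by gcongr; exact measure_union_le _ _
    _ = μ C := by rw [hAnull, hBnull]; simp
  have hC : μ C = μ {x | cdf μ x ≤ c} := by
    refine le_antisymm (measure_mono fun x hx => hx.2) ?_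
    have hsub : {x | cdf μ x ≤ c} ⊆ C ∪ ({x | cdf μ x ≤ (0 : ℝ)} ∪ {x | cdf μ x = 1}) := by
      intro x hx
      by_cases hx0 : cdf μ x ≤ 0
      · exact Or.inr (Or.inl hx0)
      · by_cases hx1 : cdf μ x = 1
        · exact Or.inr (Or.inr hx1)
        · push_neg at hx0
          exact Or.inl ⟨⟨hx0, lt_of_le_of_ne (cdf_le_one μ x) hx1⟩, hx⟩
    calc μ {x | cdf μ x ≤ c} ≤ μ (C ∪ ({x | cdf μ x ≤ (0 : ℝ)} ∪ {x | cdf μ x = 1})) :=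
        measure_mono hsub
    _ ≤ μ C + μ ({x | cdf μ x ≤ (0 : ℝ)} ∪ {x | cdf μ x = 1}) := measure_union_le _ _
    _ ≤ μ C + (μ {x | cdf μ x ≤ (0 : ℝ)} + μ {x | cdf μ x = 1}) := by
        gcongr; exact measure_union_le _ _
    _ = μ C := by rw [h0null, h1null]; simp
  rw [hunion, hC, my_cdf_level μ hna c (cdf_le_one ν t), hc, ofReal_cdf]
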